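/- Under the action of PGL(3,q) on PG(2,q^3) (via the embedding of PG(2,q) into PG(2,q^3)), the points of PG(2,q^3) fall into exactly three orbits: the q^2+q+1 points of PG(2,q); the (q^3-q)(q^2+q+1) points lying on an extended line of PG(2,q) but not in PG(2,q); and the remaining q^3(q^2-1)(q-1) points lying on no line of PG(2,q). -/

import Mathlib

section

variable (F E : Type*) [Field F] [Field E] [Algebra F E]

/-- A point of PG(2,q^3) (given by a coordinate vector over `E = GF(q^3)`)
is a point of the subplane PG(2,q) if some scalar multiple of its coordinate
vector has all coordinates in `F = GF(q)`. -/
def IsFRational (v : Fin 3 → E) : Prop :=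
  ∃ (w : Fin 3 → F) (c : E), c ≠ 0 ∧ v = c • fun i => algebraMap F E (w i)

/-- A point of PG(2,q^3) lies on an extended line of PG(2,q) if it satisfies
a nonzero linear equation with coefficients in `F = GF(q)`. -/
def OnFLine (v : Fin 3 → E) : Prop :=
  ∃ l : Fin 3 → F, l ≠ 0 ∧ ∑ i, algebraMap F E (l i) * v i = 0

/-- Two points of PG(2,q^3) are in the same PGL(3,q)-orbit: some matrix of
GL(3,q) carries a coordinate vector of the first to a coordinate vector of
the second. -/
def SamePGLOrbit (v v' : Fin 3 → E) : Prop :=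
  ∃ (g : GL (Fin 3) F) (c : Eˣ),
    (fun i => ∑ j, algebraMap F E (g.val i j) * v j) = (c : E) • v'

end

namespace PGLProof

open Matrix Finset Projectivization

variable {F E : Type*} [Field F] [Field E] [Algebra F E]

local notation "σ" => algebraMap F E

def act (a : Matrix (Fin 3) (Fin 3) F) (v : Fin 3 → E) : Fin 3 → E :=
  fun i => ∑ j, algebraMap F E (a i j) * v j

theorem samePGL_iff {v v' : Fin 3 → E} :
    SamePGLOrbit F E v v' ↔
      ∃ (g : GL (Fin 3) F) (c : Eˣ), act (g.val) v = (c : E) • v' := Iff.rfl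

theorem act_one (v : Fin 3 → E) : act (1 : Matrix (Fin 3) (Fin 3) F) v = v := by
  funext i
  simp [act, Matrix.one_apply, apply_ite (algebraMap F E), ite_mul]

theorem act_mul (a b : Matrix (Fin 3) (Fin 3) F) (v : Fin 3 → E) :
    act (a * b) v = act a (act b v) := by
  funext i
  simp only [act, Matrix.mul_apply, map_sum, _root_.map_mul, Finset.sum_mul, Finset.mul_sum]
  rw [Finset.sum_comm]
  exact Finset.sum_congr rfl fun j _ => Finset.sum_congr rfl fun k _ => by ring

theorem act_smul (a : Matrix (Fin 3) (Fin 3) F) (c : E) (v : Fin 3 → E) :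
    act a (c • v) = c • act a v := by
  funext i
  simp only [act, Pi.smul_apply, smul_eq_mul, Finset.mul_sum]
  exact Finset.sum_congr rfl fun j _ => by ring

theorem act_map (a : Matrix (Fin 3) (Fin 3) F) (w : Fin 3 → F) :
    act a (fun i => algebraMap F E (w i)) = fun i => algebraMap F E (a.mulVec w i) := by
  funext i
  simp [act, Matrix.mulVec, dotProduct, map_sum, _root_.map_mul]

theorem act_zero (a : Matrix (Fin 3) (Fin 3) F) : act a (0 : Fin 3 → E) = 0 := by
  funext i; simp [act]

theorem orb_refl (v : Fin 3 → E) : SamePGLOrbit F E v v :=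
  samePGL_iff.mpr ⟨1, 1, by rw [Units.val_one, act_one, Units.val_one, one_smul]⟩

theorem orb_symm {v v' : Fin 3 → E} (h : SamePGLOrbit F E v v') : SamePGLOrbit F E v' v := by
  obtain ⟨g, c, h⟩ := samePGL_iff.mp h
  refine samePGL_iff.mpr ⟨g⁻¹, c⁻¹, ?_⟩
  have h2 : ((c : E))⁻¹ • act (g.val) v = v' := by
    rw [h, smul_smul, inv_mul_cancel₀ c.ne_zero, one_smul]
  rw [← h2, act_smul, ← act_mul]
  have h3 : ((g⁻¹).val * g.val : Matrix (Fin 3) (Fin 3) F) = 1 := by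
    rw [← Units.val_mul, inv_mul_cancel, Units.val_one]
  rw [h3, act_one, Units.val_inv_eq_inv_val]

theorem orb_trans {v v' v'' : Fin 3 → E} (h : SamePGLOrbit F E v v')
    (h' : SamePGLOrbit F E v' v'') : SamePGLOrbit F E v v'' := by
  obtain ⟨g, c, h⟩ := samePGL_iff.mp h
  obtain ⟨g', c', h'⟩ := samePGL_iff.mp h'
  refine samePGL_iff.mpr ⟨g' * g, c * c', ?_⟩
  rw [Units.val_mul, act_mul, h, act_smul, h', Units.val_mul, smul_smul]

theorem orb_smul (v : Fin 3 → E) (c : Eˣ) : SamePGLOrbit F E ((c : E) • v) v :=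
  samePGL_iff.mpr ⟨1, c, by rw [Units.val_one, act_one]⟩

theorem rational_smul {v : Fin 3 → E} {c : E} (hc : c ≠ 0) (h : IsFRational F E v) :
    IsFRational F E (c • v) := by
  obtain ⟨w, d, hd, rfl⟩ := h
  exact ⟨w, c * d, mul_ne_zero hc hd, (smul_smul c d _)⟩

theorem rational_smul_iff {v : Fin 3 → E} {c : E} (hc : c ≠ 0) :
    IsFRational F E (c • v) ↔ IsFRational F E v := by
  refine ⟨fun h => ?_, rational_smul hc⟩
  have := rational_smul (inv_ne_zero hc) h
  rwa [smul_smul, inv_mul_cancel₀ hc, one_smul] at this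

theorem rational_act (a : Matrix (Fin 3) (Fin 3) F) {v : Fin 3 → E} (h : IsFRational F E v) :
    IsFRational F E (act a v) := by
  obtain ⟨w, d, hd, rfl⟩ := h
  exact ⟨a.mulVec w, d, hd, by rw [act_smul, act_map]⟩

theorem orb_rational {v v' : Fin 3 → E} (h : SamePGLOrbit F E v v')
    (hR : IsFRational F E v) : IsFRational F E v' := by
  obtain ⟨g, c, hgc⟩ := samePGL_iff.mp h
  have h2 := rational_act (g.val) hR
  rw [hgc] at h2
  exact (rational_smul_iff c.ne_zero).mp h2

theorem line_smul {v : Fin 3 → E} {c : E} (h : OnFLine F E v) : OnFLine F E (c • v) := by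
  obtain ⟨l, hl, hsum⟩ := h
  refine ⟨l, hl, ?_⟩
  have : ∑ i, algebraMap F E (l i) * (c • v) i = c * ∑ i, algebraMap F E (l i) * v i := by
    rw [Finset.mul_sum]
    exact Finset.sum_congr rfl fun i _ => by simp [smul_eq_mul]; ring
  rw [this, hsum, mul_zero]

theorem line_smul_iff {v : Fin 3 → E} {c : E} (hc : c ≠ 0) :
    OnFLine F E (c • v) ↔ OnFLine F E v := by
  refine ⟨fun h => ?_, line_smul⟩
  have := line_smul (c := c⁻¹) h
  rwa [smul_smul, inv_mul_cancel₀ hc, one_smul] at this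

theorem sum_act (l : Fin 3 → F) (a : Matrix (Fin 3) (Fin 3) F) (v : Fin 3 → E) :
    ∑ i, algebraMap F E (l i) * act a v i = ∑ j, algebraMap F E (Matrix.vecMul l a j) * v j := by
  simp only [act, Matrix.vecMul, dotProduct, map_sum, _root_.map_mul, Finset.sum_mul,
    Finset.mul_sum]
  rw [Finset.sum_comm]
  exact Finset.sum_congr rfl fun j _ => Finset.sum_congr rfl fun i _ => by ring

theorem orb_line {v v' : Fin 3 → E} (h : SamePGLOrbit F E v v') (hL : OnFLine F E v') :
    OnFLine F E v := by
  obtain ⟨g, c, hgc⟩ := samePGL_iff.mp h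
  obtain ⟨l', hl', hsum'⟩ := hL
  refine ⟨Matrix.vecMul l' g.val, ?_, ?_⟩
  · intro h0
    apply hl'
    have h1 := congrArg (fun x => Matrix.vecMul x ((g⁻¹).val)) h0
    simp only [Matrix.vecMul_vecMul, Matrix.zero_vecMul] at h1
    rw [← Units.val_mul, mul_inv_cancel, Units.val_one, Matrix.vecMul_one] at h1
    exact h1
  · rw [← sum_act, hgc]
    have : ∑ i, algebraMap F E (l' i) * ((c : E) • v') i
        = (c : E) * ∑ i, algebraMap F E (l' i) * v' i := by
      rw [Finset.mul_sum]
      exact Finset.sum_congr rfl fun i _ => by simp [smul_eq_mul]; ring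
    rw [this, hsum', mul_zero]

theorem not_onFLine_iff (v : Fin 3 → E) : ¬ OnFLine F E v ↔ LinearIndependent F v := by
  rw [Fintype.linearIndependent_iff]
  constructor
  · intro h g hg i
    by_contra hgi
    exact h ⟨g, fun h0 => hgi (by rw [h0]; rfl),
      by simpa [Algebra.smul_def] using hg⟩
  · rintro h ⟨l, hl, hsum⟩
    exact hl (funext fun i => h l (by simpa [Algebra.smul_def] using hsum) i)

theorem rational_onLine {v : Fin 3 → E} (h : IsFRational F E v) : OnFLine F E v := by
  obtain ⟨w, c, hc, rfl⟩ := h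
  by_cases h0 : w 0 = 0
  · refine ⟨![1, 0, 0], fun hl => ?_, ?_⟩
    · simpa using congrFun hl 0
    · simp [Fin.sum_univ_three, h0]
  · refine ⟨![w 1, -(w 0), 0], fun hl => ?_, ?_⟩
    · apply h0
      simpa [neg_eq_zero] using congrFun hl 1
    · simp [Fin.sum_univ_three]
      ring

noncomputable def glOf (A : Matrix (Fin 3) (Fin 3) F) (h : IsUnit A.det) : GL (Fin 3) F :=
  A.nonsingInvUnit h

@[simp] theorem glOf_val (A : Matrix (Fin 3) (Fin 3) F) (h : IsUnit A.det) :
    (glOf A h).val = A := rfl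

theorem exists_invertible_col {w : Fin 3 → F} (hw : w ≠ 0) :
    ∃ A : Matrix (Fin 3) (Fin 3) F, IsUnit A.det ∧ A.mulVec ![1, 0, 0] = w := by
  have hex : ∃ k, w k ≠ 0 := by
    by_contra h; push_neg at h; exact hw (funext h)
  obtain ⟨k, hk⟩ := hex
  have hcol : ∀ A : Matrix (Fin 3) (Fin 3) F, A.mulVec ![1, 0, 0] = fun i => A i 0 := by
    intro A; funext i; simp [Matrix.mulVec, dotProduct, Fin.sum_univ_three, Matrix.vecHead]
  fin_cases k
  · refine ⟨!![w 0, 0, 0; w 1, 1, 0; w 2, 0, 1], ?_, ?_⟩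
    · have : (!![w 0, 0, 0; w 1, 1, 0; w 2, 0, 1]).det = w 0 := by
        simp [Matrix.det_fin_three, Matrix.vecHead, Matrix.vecTail]
      rw [this]; exact (isUnit_iff_ne_zero).mpr hk
    · rw [hcol]; funext i; fin_cases i <;> simp
  · refine ⟨!![w 0, 1, 0; w 1, 0, 0; w 2, 0, 1], ?_, ?_⟩
    · have : (!![w 0, 1, 0; w 1, 0, 0; w 2, 0, 1]).det = -(w 1) := by
        simp [Matrix.det_fin_three, Matrix.vecHead, Matrix.vecTail]
      rw [this]; exact (isUnit_iff_ne_zero).mpr (neg_ne_zero.mpr hk)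
    · rw [hcol]; funext i; fin_cases i <;> simp
  · refine ⟨!![w 0, 1, 0; w 1, 0, 1; w 2, 0, 0], ?_, ?_⟩
    · have : (!![w 0, 1, 0; w 1, 0, 1; w 2, 0, 0]).det = w 2 := by
        simp [Matrix.det_fin_three, Matrix.vecHead, Matrix.vecTail]
      rw [this]; exact (isUnit_iff_ne_zero).mpr hk
    · rw [hcol]; funext i; fin_cases i <;> simp

theorem gl_cancel (g : GL (Fin 3) F) (x : Fin 3 → F) :
    ((g⁻¹).val).mulVec ((g.val).mulVec x) = x := by
  rw [Matrix.mulVec_mulVec, ← Units.val_mul, inv_mul_cancel, Units.val_one, Matrix.one_mulVec]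

theorem exists_GL_mulVec {w w' : Fin 3 → F} (hw : w ≠ 0) (hw' : w' ≠ 0) :
    ∃ g : GL (Fin 3) F, (g.val).mulVec w = w' := by
  obtain ⟨A, hA, hAe⟩ := exists_invertible_col hw
  obtain ⟨B, hB, hBe⟩ := exists_invertible_col hw'
  refine ⟨glOf B hB * (glOf A hA)⁻¹, ?_⟩
  have h1 : (((glOf A hA)⁻¹).val).mulVec w = ![1, 0, 0] := by
    rw [← hAe]
    exact gl_cancel (glOf A hA) _
  rw [Units.val_mul, ← Matrix.mulVec_mulVec, h1, glOf_val, hBe]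

theorem act_unit_eq_zero {g : GL (Fin 3) F} {v : Fin 3 → E} (h : act (g.val) v = 0) :
    v = 0 := by
  have : act ((g⁻¹).val) (act (g.val) v) = v := by
    rw [← act_mul, ← Units.val_mul, inv_mul_cancel, Units.val_one, act_one]
  rw [h, act_zero] at this
  exact this.symm

theorem classR {v v' : Fin 3 → E} (hv : v ≠ 0) (hv' : v' ≠ 0)
    (hR : IsFRational F E v) (hR' : IsFRational F E v') : SamePGLOrbit F E v v' := by
  obtain ⟨w, c, hc, rfl⟩ := hR
  obtain ⟨w', c', hc', rfl⟩ := hR'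
  have hw : w ≠ 0 := by
    rintro rfl; exact hv (by funext i; simp)
  have hw' : w' ≠ 0 := by
    rintro rfl; exact hv' (by funext i; simp)
  obtain ⟨g, hg⟩ := exists_GL_mulVec hw hw'
  refine samePGL_iff.mpr ⟨g, Units.mk0 (c * c'⁻¹) (mul_ne_zero hc (inv_ne_zero hc')), ?_⟩
  rw [act_smul, act_map]
  simp only [hg, Units.val_mk0]
  rw [smul_smul, mul_assoc, inv_mul_cancel₀ hc', mul_one]

theorem classTop (h3 : Module.finrank F E = 3) {v v' : Fin 3 → E}
    (hv : LinearIndependent F v) (hv' : LinearIndependent F v') : SamePGLOrbit F E v v' := by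
  classical
  let b : Module.Basis (Fin 3) F E := basisOfLinearIndependentOfCardEqFinrank hv (by simp [h3])
  let b' : Module.Basis (Fin 3) F E := basisOfLinearIndependentOfCardEqFinrank hv' (by simp [h3])
  have hb : ⇑b = v := coe_basisOfLinearIndependentOfCardEqFinrank _ _
  have hb' : ⇑b' = v' := coe_basisOfLinearIndependentOfCardEqFinrank _ _
  let M : Matrix (Fin 3) (Fin 3) F := (b.toMatrix ⇑b')ᵀ
  have hinv : Invertible (b.toMatrix ⇑b') := b.invertibleToMatrix b'
  have hMdet : IsUnit M.det := by
    rw [Matrix.det_transpose]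
    exact (Matrix.isUnit_iff_isUnit_det _).mp (isUnit_of_invertible _)
  refine samePGL_iff.mpr ⟨glOf M hMdet, 1, ?_⟩
  rw [Units.val_one, one_smul]
  funext i
  show ∑ j, algebraMap F E ((glOf M hMdet).val i j) * v j = v' i
  have hMij : ∀ j, M i j = b.repr (v' i) j := by
    intro j
    simp [M, Matrix.transpose_apply, Module.Basis.toMatrix_apply, hb']
  calc ∑ j, algebraMap F E ((glOf M hMdet).val i j) * v j
      = ∑ j, b.repr (v' i) j • b j := by
        refine Finset.sum_congr rfl fun j _ => ?_
        rw [glOf_val, hMij j, Algebra.smul_def, hb]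
    _ = v' i := b.sum_repr (v' i)

theorem li_powers (h3 : Module.finrank F E = 3) {β : E}
    (hβ : β ∉ Set.range (algebraMap F E)) : LinearIndependent F ![1, β, β * β] := by
  have hfd : Module.Finite F E := Module.finite_of_finrank_pos (by rw [h3]; norm_num)
  have hint : IsIntegral F β := IsIntegral.of_finite F β
  have hdvd : (minpoly F β).natDegree ∣ 3 := h3 ▸ minpoly.degree_dvd hint
  have hne1 : (minpoly F β).natDegree ≠ 1 := by
    intro h1
    have hdeg1 : (minpoly F β).degree = 1 :=
      (Polynomial.degree_eq_iff_natDegree_eq_of_pos zero_lt_one).mpr h1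
    obtain ⟨y, hy⟩ := RingHom.mem_range.mp (minpoly.mem_range_of_degree_eq_one F β hdeg1)
    exact hβ ⟨y, hy⟩
  have hdeg : (minpoly F β).natDegree = 3 :=
    ((Nat.prime_three).eq_one_or_self_of_dvd _ hdvd).resolve_left hne1
  rw [Fintype.linearIndependent_iff]
  intro g hg
  by_contra hne
  push_neg at hne
  obtain ⟨i, hi⟩ := hne
  set P : Polynomial F :=
    Polynomial.C (g 2) * Polynomial.X ^ 2 + Polynomial.C (g 1) * Polynomial.X +
      Polynomial.C (g 0) with hP
  have hg' : algebraMap F E (g 0) * 1 + algebraMap F E (g 1) * β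
      + algebraMap F E (g 2) * (β * β) = 0 := by
    have := hg
    rw [Fin.sum_univ_three] at this
    simpa [Algebra.smul_def] using this
  have hPev : Polynomial.aeval β P = 0 := by
    simp only [hP, map_add, _root_.map_mul, Polynomial.aeval_X, Polynomial.aeval_C, map_pow]
    linear_combination hg'
  have hPne : P ≠ 0 := by
    intro h0
    apply hi
    have hc : ∀ n, P.coeff n = 0 := by simp [h0]
    have hc0 := hc 0
    have hc1 := hc 1
    have hc2 := hc 2
    simp [hP, Polynomial.coeff_add, Polynomial.coeff_C_mul, Polynomial.coeff_X_pow,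
      Polynomial.coeff_C] at hc0 hc1 hc2
    fin_cases i <;> assumption
  have hle := minpoly.degree_le_of_ne_zero F β hPne hPev
  have h2 : P.degree ≤ 2 := Polynomial.degree_quadratic_le
  rw [Polynomial.degree_eq_natDegree (minpoly.ne_zero hint), hdeg] at hle
  have : ((3 : ℕ) : WithBot ℕ) ≤ 2 := le_trans hle h2
  norm_num at this

theorem mid (h3 : Module.finrank F E = 3) {β β' : E}
    (hβ : β ∉ Set.range (algebraMap F E)) (hβ' : β' ∉ Set.range (algebraMap F E)) :
    SamePGLOrbit F E ![0, 1, β] ![0, 1, β'] := by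
  classical
  have hfd : Module.Finite F E := Module.finite_of_finrank_pos (by rw [h3]; norm_num)
  let b : Module.Basis (Fin 3) F E :=
    basisOfLinearIndependentOfCardEqFinrank (li_powers h3 hβ) (by simp [h3])
  let b' : Module.Basis (Fin 3) F E :=
    basisOfLinearIndependentOfCardEqFinrank (li_powers h3 hβ') (by simp [h3])
  have hb : ⇑b = ![1, β, β * β] := coe_basisOfLinearIndependentOfCardEqFinrank _ _
  have hb' : ⇑b' = ![1, β', β' * β'] := coe_basisOfLinearIndependentOfCardEqFinrank _ _
  let f : Module.Dual F E := b.coord 2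
  let f' : Module.Dual F E := b'.coord 2
  have hf1 : f 1 = 0 := by
    have h1 : (1 : E) = b 0 := by rw [hb]; simp
    rw [h1]
    simp [f, Module.Basis.coord_apply, Module.Basis.repr_self_apply]
  have hfβ : f β = 0 := by
    have h1 : β = b 1 := by rw [hb]; simp
    rw [h1]
    simp [f, Module.Basis.coord_apply, Module.Basis.repr_self_apply]
  have hftop : f (b 2) = 1 := by
    simp [f, Module.Basis.coord_apply, Module.Basis.repr_self_apply]
  have hf'1 : f' 1 = 0 := by
    have h1 : (1 : E) = b' 0 := by rw [hb']; simp
    rw [h1]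
    simp [f', Module.Basis.coord_apply, Module.Basis.repr_self_apply]
  have hf'β : f' β' = 0 := by
    have h1 : β' = b' 1 := by rw [hb']; simp
    rw [h1]
    simp [f', Module.Basis.coord_apply, Module.Basis.repr_self_apply]
  have hf'top : f' (b' 2) = 1 := by
    simp [f', Module.Basis.coord_apply, Module.Basis.repr_self_apply]
  let Φ : E →ₗ[F] Module.Dual F E :=
    { toFun := fun e => f.comp (LinearMap.mulLeft F e)
      map_add' := fun x y => by
        ext z; simp [LinearMap.mulLeft_apply, add_mul]
      map_smul' := fun a x => by
        ext z; simp [LinearMap.mulLeft_apply, smul_mul_assoc] }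
  have hΦapp : ∀ (e x : E), Φ e x = f (e * x) := fun e x => rfl
  have hΦinj : Function.Injective Φ := by
    rw [← LinearMap.ker_eq_bot, LinearMap.ker_eq_bot']
    intro e he
    by_contra hne
    have hall : ∀ y : E, f y = 0 := by
      intro y
      calc f y = Φ e (e⁻¹ * y) := by
            rw [hΦapp, ← mul_assoc, mul_inv_cancel₀ hne, one_mul]
        _ = 0 := by rw [he]; rfl
    have := hall (b 2)
    rw [hftop] at this
    exact one_ne_zero this
  have hΦsurj : Function.Surjective Φ := by
    have h1 : Module.finrank F (LinearMap.range Φ) = Module.finrank F (Module.Dual F E) := by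
      rw [LinearMap.finrank_range_of_inj hΦinj, Subspace.dual_finrank_eq]
    rw [← LinearMap.range_eq_top]
    exact Submodule.eq_top_of_finrank_eq h1
  obtain ⟨c, hc⟩ := hΦsurj f'
  have hc0 : c ≠ 0 := by
    intro h0
    rw [h0, map_zero] at hc
    have h1 := hf'top
    rw [← hc] at h1
    simp at h1
  have hfc : f c = 0 := by
    have := congrArg (fun g : Module.Dual F E => g 1) hc
    simp only [hΦapp, mul_one] at this
    rw [this, hf'1]
  have hfcβ' : f (c * β') = 0 := by
    have := congrArg (fun g : Module.Dual F E => g β') hc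
    simp only [hΦapp] at this
    rw [this, hf'β]
  have decomp : ∀ e : E, f e = 0 →
      e = algebraMap F E (b.repr e 0) + algebraMap F E (b.repr e 1) * β := by
    intro e he
    have hsum := b.sum_repr e
    rw [Fin.sum_univ_three] at hsum
    have h2 : b.repr e 2 = 0 := by
      rw [← Module.Basis.coord_apply]; exact he
    rw [h2, zero_smul, add_zero] at hsum
    have hb0 : b 0 = 1 := by rw [hb]; simp
    have hb1 : b 1 = β := by rw [hb]; simp
    rw [hb0, hb1, Algebra.smul_def, Algebra.smul_def, mul_one] at hsum
    exact hsum.symm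
  set x := b.repr c 0 with hx
  set y := b.repr c 1 with hy
  set z := b.repr (c * β') 0 with hz
  set w := b.repr (c * β') 1 with hwdef
  have hcx : c = algebraMap F E x + algebraMap F E y * β := decomp c hfc
  have hcz : c * β' = algebraMap F E z + algebraMap F E w * β := decomp _ hfcβ'
  have hD : x * w - y * z ≠ 0 := by
    intro hD0
    have hxw : x * w = y * z := sub_eq_zero.mp hD0
    by_cases hyc : y = 0
    · have hxne : x ≠ 0 := by
        intro hx0
        apply hc0
        rw [hcx, hx0, hyc]; simp
      have hwc : w = 0 := by
        rcases mul_eq_zero.mp (by rw [hxw, hyc, zero_mul] : x * w = 0) with h | h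
        · exact absurd h hxne
        · exact h
      apply hβ'
      refine ⟨z / x, ?_⟩
      have hcc : c = algebraMap F E x := by rw [hcx, hyc]; simp
      have hkey : algebraMap F E x * β' = algebraMap F E z := by
        rw [← hcc, hcz, hwc]; simp
      have hσx : algebraMap F E x ≠ 0 := fun h => hxne ((map_eq_zero _).mp h)
      rw [map_div₀, ← hkey, mul_comm, mul_div_assoc, div_self hσx, mul_one]
    · apply hβ'
      refine ⟨w / y, ?_⟩
      have h1 : w / y * y = w := div_mul_cancel₀ w hyc
      have h2 : w / y * x = z := by
        rw [div_mul_eq_mul_div, div_eq_iff hyc]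
        linear_combination hxw
      have hkey : algebraMap F E (w / y) * c = c * β' := by
        calc algebraMap F E (w / y) * c
            = algebraMap F E (w / y) * algebraMap F E x +
              algebraMap F E (w / y) * algebraMap F E y * β := by rw [hcx]; ring
          _ = algebraMap F E z + algebraMap F E w * β := by
              rw [← _root_.map_mul, ← _root_.map_mul, h2, h1]
          _ = c * β' := hcz.symm
      rw [mul_comm] at hkey
      exact mul_left_cancel₀ hc0 hkey
  set A : Matrix (Fin 3) (Fin 3) F := !![1, 0, 0; 0, x, y; 0, z, w] with hA
  have hdet : A.det = x * w - y * z := by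
    simp [hA, Matrix.det_fin_three, Matrix.vecHead, Matrix.vecTail]
  refine samePGL_iff.mpr
    ⟨glOf A (by rw [hdet]; exact isUnit_iff_ne_zero.mpr hD), Units.mk0 c hc0, ?_⟩
  funext i
  show ∑ j, algebraMap F E (A i j) * (![0, 1, β] j) = (Units.mk0 c hc0 : E) • ![0, 1, β'] i
  rw [Fin.sum_univ_three]
  fin_cases i
  · simp [hA, Matrix.vecHead, Matrix.vecTail]
  · simp only [hA, Units.val_mk0, Pi.smul_apply, smul_eq_mul]
    simp [Matrix.vecHead, Matrix.vecTail]
    exact hcx.symm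
  · simp only [hA, Units.val_mk0, Pi.smul_apply, smul_eq_mul]
    simp [Matrix.vecHead, Matrix.vecTail]
    exact hcz.symm

theorem norm_d2 {v : Fin 3 → E} (hv : v ≠ 0) (hL : OnFLine F E v)
    (hR : ¬ IsFRational F E v) :
    ∃ β : E, β ∉ Set.range (algebraMap F E) ∧ SamePGLOrbit F E v ![0, 1, β] := by
  obtain ⟨l, hl, hsum⟩ := hL
  obtain ⟨A, hAdet, hAe⟩ := exists_invertible_col hl
  have hTdet : IsUnit Aᵀ.det := by rwa [Matrix.det_transpose]
  set g : GL (Fin 3) F := glOf Aᵀ hTdet with hgdef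
  set u : Fin 3 → E := act Aᵀ v with hu
  have hvu : SamePGLOrbit F E v u :=
    samePGL_iff.mpr ⟨g, 1, by rw [Units.val_one, one_smul]; rfl⟩
  have hA0 : ∀ j, A j 0 = l j := by
    intro j
    have h := congrFun hAe j
    simpa [Matrix.mulVec, dotProduct, Fin.sum_univ_three, Matrix.vecHead] using h
  have hu0 : u 0 = 0 := by
    rw [hu]
    show ∑ j, algebraMap F E (Aᵀ 0 j) * v j = 0
    rw [← hsum]
    exact Finset.sum_congr rfl fun j _ => by rw [Matrix.transpose_apply, hA0 j]
  have hu_ne : u ≠ 0 := by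
    intro h0
    exact hv (act_unit_eq_zero (g := g) (by rw [hgdef]; exact h0))
  have hRu : ¬ IsFRational F E u := fun h => hR (orb_rational (orb_symm hvu) h)
  have hu1 : u 1 ≠ 0 := by
    intro h1
    apply hRu
    have hu2 : u 2 ≠ 0 := by
      intro h2
      apply hu_ne
      funext i
      fin_cases i
      · exact hu0
      · exact h1
      · exact h2
    refine ⟨![0, 0, 1], u 2, hu2, ?_⟩
    funext i
    fin_cases i <;> simp [hu0, h1]
  refine ⟨(u 1)⁻¹ * u 2, ?_, ?_⟩
  · rintro ⟨t, ht⟩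
    apply hRu
    refine ⟨![0, 1, t], u 1, hu1, ?_⟩
    funext i
    fin_cases i
    · simp [hu0]
    · simp
    · simp only [Pi.smul_apply, smul_eq_mul]
      show u 2 = u 1 * algebraMap F E t
      rw [ht, ← mul_assoc, mul_inv_cancel₀ hu1, one_mul]
  · have hscal : ((Units.mk0 (u 1)⁻¹ (inv_ne_zero hu1) : Eˣ) : E) • u
        = ![0, 1, (u 1)⁻¹ * u 2] := by
      funext i
      fin_cases i <;> simp [hu0, inv_mul_cancel₀ hu1]
    have hstep : SamePGLOrbit F E u ![0, 1, (u 1)⁻¹ * u 2] :=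
      hscal ▸ orb_symm (orb_smul u (Units.mk0 (u 1)⁻¹ (inv_ne_zero hu1)))
    exact orb_trans hvu hstep

theorem part1 (h3 : Module.finrank F E = 3) {v v' : Fin 3 → E} (hv : v ≠ 0) (hv' : v' ≠ 0) :
    SamePGLOrbit F E v v' ↔
      ((IsFRational F E v ↔ IsFRational F E v') ∧ (OnFLine F E v ↔ OnFLine F E v')) := by
  constructor
  · intro h
    exact ⟨⟨orb_rational h, orb_rational (orb_symm h)⟩,
      ⟨fun hL => orb_line (orb_symm h) hL, orb_line h⟩⟩
  · rintro ⟨hRiff, hLiff⟩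
    by_cases hR : IsFRational F E v
    · exact classR hv hv' hR (hRiff.mp hR)
    · have hR' : ¬ IsFRational F E v' := fun h => hR (hRiff.mpr h)
      by_cases hL : OnFLine F E v
      · have hL' : OnFLine F E v' := hLiff.mp hL
        obtain ⟨β, hβ, h1⟩ := norm_d2 hv hL hR
        obtain ⟨β', hβ', h2⟩ := norm_d2 hv' hL' hR'
        exact orb_trans (orb_trans h1 (mid h3 hβ hβ')) (orb_symm h2)
      · have hL' : ¬ OnFLine F E v' := fun h => hL (hLiff.mpr h)
        exact classTop h3 ((not_onFLine_iff v).mp hL) ((not_onFLine_iff v').mp hL')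

theorem proj_count {K V : Type*} [Field K] [AddCommGroup V] [Module K V] [Fintype K] [Finite V]
    (Q : V → Prop) (hQ : ∀ (c : Kˣ) (v : V), Q v → Q ((c : K) • v)) :
    Nat.card {p : Projectivization K V //
        ∃ (w : V) (hw : w ≠ 0), p = Projectivization.mk K w hw ∧ Q w} * (Fintype.card K - 1)
      = Nat.card {v : V // v ≠ 0 ∧ Q v} := by
  classical
  have key : ∀ p : Projectivization K V,
      (∃ (w : V) (hw : w ≠ 0), p = Projectivization.mk K w hw ∧ Q w) → Q p.rep := by
    rintro p ⟨w, hw, hp, hQw⟩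
    have hmk : Projectivization.mk K p.rep p.rep_nonzero = Projectivization.mk K w hw := by
      rw [Projectivization.mk_rep, hp]
    obtain ⟨a, ha⟩ := (Projectivization.mk_eq_mk_iff K _ _ _ _).mp hmk
    have := hQ a w hQw
    rwa [← Units.smul_def, ha] at this
  let φ : {p : Projectivization K V //
      ∃ (w : V) (hw : w ≠ 0), p = Projectivization.mk K w hw ∧ Q w} × Kˣ →
      {v : V // v ≠ 0 ∧ Q v} := fun x =>
    ⟨(x.2 : K) • x.1.1.rep,
      smul_ne_zero x.2.ne_zero (Projectivization.rep_nonzero _),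
      hQ x.2 _ (key _ x.1.2)⟩
  have hbij : Function.Bijective φ := by
    constructor
    · rintro ⟨⟨p, hp⟩, c⟩ ⟨⟨p', hp'⟩, c'⟩ h
      have he : (c : K) • p.rep = (c' : K) • p'.rep := congrArg Subtype.val h
      have hpp : p = p' := by
        rw [← Projectivization.mk_rep p, ← Projectivization.mk_rep p']
        refine (Projectivization.mk_eq_mk_iff K _ _ _ _).mpr ⟨c⁻¹ * c', ?_⟩
        rw [Units.smul_def, Units.val_mul, mul_smul, Units.val_inv_eq_inv_val, ← he,
          smul_smul, inv_mul_cancel₀ c.ne_zero, one_smul]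
      subst hpp
      have hcc : c = c' := by
        have h2 : ((c : K) - (c' : K)) • p.rep = 0 := by rw [sub_smul, he, sub_self]
        rcases smul_eq_zero.mp h2 with h3 | h3
        · exact Units.ext (by rwa [sub_eq_zero] at h3)
        · exact absurd h3 (Projectivization.rep_nonzero p)
      rw [hcc]
    · rintro ⟨v, hv0, hQv⟩
      obtain ⟨a, ha⟩ := (Projectivization.mk_eq_mk_iff K _ _ _ _).mp
        (Projectivization.mk_rep (Projectivization.mk K v hv0))
      refine ⟨⟨⟨Projectivization.mk K v hv0, ⟨v, hv0, rfl, hQv⟩⟩, a⁻¹⟩, ?_⟩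
      apply Subtype.ext
      show ((a⁻¹ : Kˣ) : K) • (Projectivization.mk K v hv0).rep = v
      rw [← ha, Units.smul_def, smul_smul, Units.val_inv_eq_inv_val,
        inv_mul_cancel₀ a.ne_zero, one_smul]
  calc Nat.card {p : Projectivization K V //
        ∃ (w : V) (hw : w ≠ 0), p = Projectivization.mk K w hw ∧ Q w} * (Fintype.card K - 1)
      = Nat.card {p : Projectivization K V //
        ∃ (w : V) (hw : w ≠ 0), p = Projectivization.mk K w hw ∧ Q w} * Nat.card Kˣ := by
        rw [← Nat.card_eq_fintype_card (α := K), ← Nat.card_units]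
    _ = Nat.card ({p : Projectivization K V //
        ∃ (w : V) (hw : w ≠ 0), p = Projectivization.mk K w hw ∧ Q w} × Kˣ) :=
        (Nat.card_prod _ _).symm
    _ = Nat.card {v : V // v ≠ 0 ∧ Q v} := Nat.card_congr (Equiv.ofBijective φ hbij)

theorem S_iff {Q : (Fin 3 → E) → Prop}
    (hQ : ∀ (c : Eˣ) (v : Fin 3 → E), Q v ↔ Q ((c : E) • v))
    (p : Projectivization E (Fin 3 → E)) :
    (∃ (w : Fin 3 → E) (hw : w ≠ 0), p = Projectivization.mk E w hw ∧ Q w) ↔ Q p.rep := by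
  constructor
  · rintro ⟨w, hw, hp, hQw⟩
    have hmk : Projectivization.mk E p.rep p.rep_nonzero = Projectivization.mk E w hw := by
      rw [Projectivization.mk_rep, hp]
    obtain ⟨a, ha⟩ := (Projectivization.mk_eq_mk_iff E _ _ _ _).mp hmk
    have := (hQ a w).mp hQw
    rwa [← Units.smul_def, ha] at this
  · intro h
    exact ⟨p.rep, p.rep_nonzero, (Projectivization.mk_rep p).symm, h⟩

theorem card_nonzero {V : Type*} [Zero V] [Finite V] :
    Nat.card {v : V // v ≠ 0} = Nat.card V - 1 := by
  classical
  letI : Fintype V := Fintype.ofFinite V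
  rw [Nat.card_eq_fintype_card, Nat.card_eq_fintype_card]
  have h := Fintype.card_subtype_compl (α := V) (fun v : V => v = 0)
  rw [Fintype.card_subtype_eq (0 : V)] at h
  rw [← h]

theorem card_SR :
    Nat.card {p : Projectivization E (Fin 3 → E) //
        ∃ (v : Fin 3 → E) (hv : v ≠ 0), p = Projectivization.mk E v hv ∧ IsFRational F E v}
      = Nat.card (Projectivization F (Fin 3 → F)) := by
  classical
  let T : (Fin 3 → F) →ₛₗ[algebraMap F E] (Fin 3 → E) :=
    { toFun := fun w i => algebraMap F E (w i)
      map_add' := fun a b => by funext i; simp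
      map_smul' := fun a w => by funext i; simp [Algebra.smul_def] }
  have hTapp : ∀ (w : Fin 3 → F) (i : Fin 3), T w i = algebraMap F E (w i) := fun w i => rfl
  have hTinj : Function.Injective T := fun a b h =>
    funext fun i => (algebraMap F E).injective (congrFun h i)
  let Ψ0 : Projectivization F (Fin 3 → F) → Projectivization E (Fin 3 → E) :=
    Projectivization.map T hTinj
  have hSd : ∀ ℓ, ∃ (v : Fin 3 → E) (hv : v ≠ 0),
      Ψ0 ℓ = Projectivization.mk E v hv ∧ IsFRational F E v := by
    refine Projectivization.ind fun w hw => ?_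
    have hTw : T w ≠ 0 := fun h0 => hw (hTinj (by rw [h0, map_zero]))
    refine ⟨T w, hTw, ?_, ⟨w, 1, one_ne_zero, by funext i; simp [hTapp]⟩⟩
    exact Projectivization.map_mk T hTinj w hw
  have hinj : ∀ ℓ ℓ', Ψ0 ℓ = Ψ0 ℓ' → ℓ = ℓ' := by
    refine Projectivization.ind fun w hw => ?_
    refine Projectivization.ind fun w' hw' => ?_
    intro h
    have hTw : T w ≠ 0 := fun h0 => hw (hTinj (by rw [h0, map_zero]))
    have hTw' : T w' ≠ 0 := fun h0 => hw' (hTinj (by rw [h0, map_zero]))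
    rw [show Ψ0 (Projectivization.mk F w hw) = Projectivization.mk E (T w) hTw from rfl,
      show Ψ0 (Projectivization.mk F w' hw') = Projectivization.mk E (T w') hTw' from rfl] at h
    obtain ⟨a, ha⟩ := (Projectivization.mk_eq_mk_iff' E _ _ _ _).mp h
    obtain ⟨i0, hi0⟩ : ∃ i, w' i ≠ 0 := by
      by_contra hno; push_neg at hno; exact hw' (funext hno)
    have hai : a * algebraMap F E (w' i0) = algebraMap F E (w i0) := by
      have h1 := congrFun ha i0
      simpa [hTapp, smul_eq_mul] using h1
    have hσ0 : algebraMap F E (w' i0) ≠ 0 := fun h1 => hi0 ((map_eq_zero _).mp h1)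
    have hat : a = algebraMap F E (w i0 / w' i0) := by
      rw [map_div₀, eq_div_iff hσ0]; exact hai
    refine (Projectivization.mk_eq_mk_iff' F _ _ _ _).mpr ⟨w i0 / w' i0, funext fun i => ?_⟩
    have h1 := congrFun ha i
    rw [hat] at h1
    have h2 : algebraMap F E (w i0 / w' i0 * w' i) = algebraMap F E (w i) := by
      rw [_root_.map_mul]; simpa [hTapp, smul_eq_mul] using h1
    have h3 := (algebraMap F E).injective h2
    simpa [smul_eq_mul] using h3
  have hsurj : ∀ p : {p : Projectivization E (Fin 3 → E) //
      ∃ (v : Fin 3 → E) (hv : v ≠ 0), p = Projectivization.mk E v hv ∧ IsFRational F E v},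
      ∃ ℓ, Ψ0 ℓ = p.1 := by
    rintro ⟨p, v, hv, rfl, w, c, hc, rfl⟩
    have hw : w ≠ 0 := by
      rintro rfl
      exact hv (by funext i; simp)
    refine ⟨Projectivization.mk F w hw, ?_⟩
    have hTw : T w ≠ 0 := fun h0 => hw (hTinj (by rw [h0, map_zero]))
    rw [show Ψ0 (Projectivization.mk F w hw) = Projectivization.mk E (T w) hTw from rfl]
    refine (Projectivization.mk_eq_mk_iff' E _ _ _ _).mpr ⟨c⁻¹, ?_⟩
    rw [smul_smul, inv_mul_cancel₀ hc, one_smul]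
    rfl
  refine (Nat.card_congr (Equiv.ofBijective
    (fun ℓ => (⟨Ψ0 ℓ, hSd ℓ⟩ : {p : Projectivization E (Fin 3 → E) //
      ∃ (v : Fin 3 → E) (hv : v ≠ 0), p = Projectivization.mk E v hv ∧ IsFRational F E v}))
    ⟨fun ℓ ℓ' h => hinj ℓ ℓ' (congrArg Subtype.val h),
     fun p => (hsurj p).imp fun ℓ h => Subtype.ext h⟩)).symm

theorem arith1 {q : ℕ} (hq : 1 ≤ q) : (q ^ 2 + q + 1) * (q - 1) = q ^ 3 - 1 := by
  obtain ⟨m, rfl⟩ : ∃ m, q = m + 1 := ⟨q - 1, by omega⟩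
  have s1 : m + 1 - 1 = m := by omega
  have s2 : (m + 1) ^ 3 - 1 = m ^ 3 + 3 * m ^ 2 + 3 * m := by
    rw [Nat.sub_eq_iff_eq_add (Nat.one_le_pow _ _ (Nat.succ_pos m))]; (try simp only [Nat.succ_eq_add_one]); ring
  rw [s1, s2]; ring

theorem arith3 {q : ℕ} (hq : 1 ≤ q) :
    q ^ 3 * (q ^ 2 - 1) * (q - 1) * (q ^ 3 - 1)
      = (q ^ 3 - 1) * (q ^ 3 - q) * (q ^ 3 - q ^ 2) := by
  obtain ⟨m, rfl⟩ : ∃ m, q = m + 1 := ⟨q - 1, by omega⟩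
  have s1 : m + 1 - 1 = m := by omega
  have s2 : (m + 1) ^ 3 - 1 = m ^ 3 + 3 * m ^ 2 + 3 * m := by
    rw [Nat.sub_eq_iff_eq_add (Nat.one_le_pow _ _ (Nat.succ_pos m))]; (try simp only [Nat.succ_eq_add_one]); ring
  have s3 : (m + 1) ^ 3 - (m + 1) = m ^ 3 + 3 * m ^ 2 + 2 * m := by
    rw [Nat.sub_eq_iff_eq_add (Nat.le_self_pow (by norm_num) _)]; (try simp only [Nat.succ_eq_add_one]); ring
  have s4 : (m + 1) ^ 3 - (m + 1) ^ 2 = m ^ 3 + 2 * m ^ 2 + m := by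
    rw [Nat.sub_eq_iff_eq_add (Nat.pow_le_pow_right (Nat.succ_le_succ (Nat.zero_le m))
      (by norm_num))]; (try simp only [Nat.succ_eq_add_one]); ring
  have s5 : (m + 1) ^ 2 - 1 = m ^ 2 + 2 * m := by
    rw [Nat.sub_eq_iff_eq_add (Nat.one_le_pow _ _ (Nat.succ_pos m))]; (try simp only [Nat.succ_eq_add_one]); ring
  rw [s1, s2, s3, s4, s5]; ring

theorem arith4 {q : ℕ} (hq : 1 ≤ q) :
    (q ^ 3 - q) * (q ^ 2 + q + 1) + ((q ^ 2 + q + 1) + q ^ 3 * (q ^ 2 - 1) * (q - 1))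
      = (q ^ 3) ^ 2 + q ^ 3 + 1 := by
  obtain ⟨m, rfl⟩ : ∃ m, q = m + 1 := ⟨q - 1, by omega⟩
  have s1 : m + 1 - 1 = m := by omega
  have s3 : (m + 1) ^ 3 - (m + 1) = m ^ 3 + 3 * m ^ 2 + 2 * m := by
    rw [Nat.sub_eq_iff_eq_add (Nat.le_self_pow (by norm_num) _)]; (try simp only [Nat.succ_eq_add_one]); ring
  have s5 : (m + 1) ^ 2 - 1 = m ^ 2 + 2 * m := by
    rw [Nat.sub_eq_iff_eq_add (Nat.one_le_pow _ _ (Nat.succ_pos m))]; (try simp only [Nat.succ_eq_add_one]); ring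
  rw [s1, s3, s5]; ring

end PGLProof

/-- Under the action of PGL(3,q) on PG(2,q^3) the points fall into exactly
three orbits: the `q^2+q+1` points of PG(2,q); the `(q^3-q)(q^2+q+1)` points
on an extended line of PG(2,q) but not in PG(2,q); and the remaining
`q^3(q^2-1)(q-1)` points on no line of PG(2,q). -/
theorem pgl_orbits_on_cubic_extension (F E : Type*) [Field F] [Fintype F]
    [Field E] [Fintype E] [Algebra F E] (q : ℕ) (hq : Fintype.card F = q)
    (hE : Fintype.card E = q ^ 3) :
    (∀ (v v' : Fin 3 → E), v ≠ 0 → v' ≠ 0 →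
      (SamePGLOrbit F E v v' ↔
        ((IsFRational F E v ↔ IsFRational F E v') ∧
          (OnFLine F E v ↔ OnFLine F E v')))) ∧
    Nat.card {p : Projectivization E (Fin 3 → E) //
        ∃ (v : Fin 3 → E) (hv : v ≠ 0), p = Projectivization.mk E v hv ∧
          IsFRational F E v} = q ^ 2 + q + 1 ∧
    Nat.card {p : Projectivization E (Fin 3 → E) //
        ∃ (v : Fin 3 → E) (hv : v ≠ 0), p = Projectivization.mk E v hv ∧
          OnFLine F E v ∧ ¬ IsFRational F E v} = (q ^ 3 - q) * (q ^ 2 + q + 1) ∧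
    Nat.card {p : Projectivization E (Fin 3 → E) //
        ∃ (v : Fin 3 → E) (hv : v ≠ 0), p = Projectivization.mk E v hv ∧
          ¬ OnFLine F E v} = q ^ 3 * (q ^ 2 - 1) * (q - 1) := by
  classical
  have hq1 : 1 ≤ q := hq ▸ Fintype.card_pos
  have hq2 : 2 ≤ q := hq ▸ Fintype.one_lt_card
  have h3 : Module.finrank F E = 3 := by
    have hpow : Fintype.card E = Fintype.card F ^ Module.finrank F E := Module.card_eq_pow_finrank
    rw [hq, hE] at hpow
    exact Nat.pow_right_injective hq2 hpow.symm
  have hq3one : 1 ≤ q ^ 3 := Nat.one_le_pow _ _ (by omega)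
  have hq3two : 2 ≤ q ^ 3 := le_trans hq2 (Nat.le_self_pow (by norm_num) q)
  have hq3pos : 0 < q ^ 3 - 1 := by omega
  have hqpos : 0 < q - 1 := by omega
  -- count of the F-rational projective plane
  have hPF : Nat.card (Projectivization F (Fin 3 → F)) = q ^ 2 + q + 1 := by
    have h := PGLProof.proj_count (K := F) (V := Fin 3 → F) (fun _ => True)
      (fun _ _ _ => trivial)
    rw [Nat.card_congr (Equiv.subtypeUnivEquiv
      (fun p => ⟨p.rep, p.rep_nonzero, (Projectivization.mk_rep p).symm, trivial⟩))] at h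
    rw [Nat.card_congr (Equiv.subtypeEquivRight
      (fun w : Fin 3 → F => by simp : ∀ w : Fin 3 → F, (w ≠ 0 ∧ True) ↔ w ≠ 0))] at h
    rw [PGLProof.card_nonzero] at h
    have hcF : Nat.card (Fin 3 → F) = q ^ 3 := by
      rw [Nat.card_eq_fintype_card, Fintype.card_fun, hq, Fintype.card_fin]
    rw [hcF, hq] at h
    apply Nat.eq_of_mul_eq_mul_right hqpos
    rw [h, PGLProof.arith1 hq1]
  -- total count of the big projective plane
  have hT : Nat.card (Projectivization E (Fin 3 → E)) = (q ^ 3) ^ 2 + q ^ 3 + 1 := by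
    have h := PGLProof.proj_count (K := E) (V := Fin 3 → E) (fun _ => True)
      (fun _ _ _ => trivial)
    rw [Nat.card_congr (Equiv.subtypeUnivEquiv
      (fun p => ⟨p.rep, p.rep_nonzero, (Projectivization.mk_rep p).symm, trivial⟩))] at h
    rw [Nat.card_congr (Equiv.subtypeEquivRight
      (fun w : Fin 3 → E => by simp : ∀ w : Fin 3 → E, (w ≠ 0 ∧ True) ↔ w ≠ 0))] at h
    rw [PGLProof.card_nonzero] at h
    have hcE : Nat.card (Fin 3 → E) = (q ^ 3) ^ 3 := by
      rw [Nat.card_eq_fintype_card, Fintype.card_fun, hE, Fintype.card_fin]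
    rw [hcE, hE] at h
    apply Nat.eq_of_mul_eq_mul_right hq3pos
    rw [h, PGLProof.arith1 hq3one]
  -- rational points count
  have hv2 : Nat.card {p : Projectivization E (Fin 3 → E) //
      ∃ (v : Fin 3 → E) (hv : v ≠ 0), p = Projectivization.mk E v hv ∧
        IsFRational F E v} = q ^ 2 + q + 1 := by
    rw [PGLProof.card_SR, hPF]
  -- non-line points count
  have hv4 : Nat.card {p : Projectivization E (Fin 3 → E) //
      ∃ (v : Fin 3 → E) (hv : v ≠ 0), p = Projectivization.mk E v hv ∧
        ¬ OnFLine F E v} = q ^ 3 * (q ^ 2 - 1) * (q - 1) := by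
    have h := PGLProof.proj_count (K := E) (V := Fin 3 → E) (fun v => ¬ OnFLine F E v)
      (fun c v hnl hL' => hnl ((PGLProof.line_smul_iff c.ne_zero).mp hL'))
    have heq : Nat.card {v : Fin 3 → E // v ≠ 0 ∧ ¬ OnFLine F E v}
        = Nat.card {s : Fin 3 → E // LinearIndependent F s} :=
      Nat.card_congr (Equiv.subtypeEquivRight (fun v =>
        ⟨fun hv => (PGLProof.not_onFLine_iff v).mp hv.2,
         fun hli => ⟨fun h0 => (hli.ne_zero 0) (by rw [h0]; rfl),
           (PGLProof.not_onFLine_iff v).mpr hli⟩⟩))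
    rw [heq] at h
    have hLI := card_linearIndependent (K := F) (V := E) (k := 3) (by rw [h3])
    rw [h3, hq, Fin.prod_univ_three] at hLI
    simp only [Fin.val_zero, Fin.val_one, Fin.val_two, pow_zero, pow_one] at hLI
    rw [hLI, hE] at h
    apply Nat.eq_of_mul_eq_mul_right hq3pos
    rw [h, PGLProof.arith3 hq1]
  refine ⟨fun v v' hv hv' => PGLProof.part1 h3 hv hv', hv2, ?_, hv4⟩
  -- the middle count, by subtraction
  haveI : Finite (Projectivization E (Fin 3 → E)) :=
    Quotient.finite (projectivizationSetoid E (Fin 3 → E))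
  letI : Fintype (Projectivization E (Fin 3 → E)) := Fintype.ofFinite _
  have hiffR : ∀ (c : Eˣ) (v : Fin 3 → E),
      IsFRational F E v ↔ IsFRational F E ((c : E) • v) :=
    fun c v => (PGLProof.rational_smul_iff c.ne_zero).symm
  have hiffM : ∀ (c : Eˣ) (v : Fin 3 → E),
      (OnFLine F E v ∧ ¬ IsFRational F E v) ↔
        (OnFLine F E ((c : E) • v) ∧ ¬ IsFRational F E ((c : E) • v)) := by
    intro c v
    rw [PGLProof.line_smul_iff c.ne_zero, PGLProof.rational_smul_iff c.ne_zero]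
  have hiffN : ∀ (c : Eˣ) (v : Fin 3 → E),
      (¬ OnFLine F E v) ↔ ¬ OnFLine F E ((c : E) • v) := by
    intro c v
    rw [PGLProof.line_smul_iff c.ne_zero]
  have eR : Nat.card {p : Projectivization E (Fin 3 → E) //
      ∃ (v : Fin 3 → E) (hv : v ≠ 0), p = Projectivization.mk E v hv ∧
        IsFRational F E v}
      = Fintype.card {p : Projectivization E (Fin 3 → E) // IsFRational F E p.rep} := by
    rw [Nat.card_congr (Equiv.subtypeEquivRight (PGLProof.S_iff hiffR)),
      Nat.card_eq_fintype_card]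
  have eM : Nat.card {p : Projectivization E (Fin 3 → E) //
      ∃ (v : Fin 3 → E) (hv : v ≠ 0), p = Projectivization.mk E v hv ∧
        OnFLine F E v ∧ ¬ IsFRational F E v}
      = Fintype.card {p : Projectivization E (Fin 3 → E) //
          OnFLine F E p.rep ∧ ¬ IsFRational F E p.rep} := by
    rw [Nat.card_congr (Equiv.subtypeEquivRight (PGLProof.S_iff hiffM)),
      Nat.card_eq_fintype_card]
  have eN : Nat.card {p : Projectivization E (Fin 3 → E) //
      ∃ (v : Fin 3 → E) (hv : v ≠ 0), p = Projectivization.mk E v hv ∧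
        ¬ OnFLine F E v}
      = Fintype.card {p : Projectivization E (Fin 3 → E) // ¬ OnFLine F E p.rep} := by
    rw [Nat.card_congr (Equiv.subtypeEquivRight (PGLProof.S_iff hiffN)),
      Nat.card_eq_fintype_card]
  have hpart : Fintype.card {p : Projectivization E (Fin 3 → E) // IsFRational F E p.rep}
      + Fintype.card {p : Projectivization E (Fin 3 → E) //
          OnFLine F E p.rep ∧ ¬ IsFRational F E p.rep}
      + Fintype.card {p : Projectivization E (Fin 3 → E) // ¬ OnFLine F E p.rep}
      = Fintype.card (Projectivization E (Fin 3 → E)) := by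
    rw [Fintype.card_subtype, Fintype.card_subtype, Fintype.card_subtype, ← Finset.card_univ]
    have hdisj : Disjoint
        (Finset.univ.filter fun p : Projectivization E (Fin 3 → E) => IsFRational F E p.rep)
        (Finset.univ.filter fun p : Projectivization E (Fin 3 → E) =>
          OnFLine F E p.rep ∧ ¬ IsFRational F E p.rep) :=
      (Finset.disjoint_filter).mpr fun p _ hA hB => hB.2 hA
    rw [← Finset.card_union_of_disjoint hdisj]
    have hun : (Finset.univ.filter fun p : Projectivization E (Fin 3 → E) =>
          IsFRational F E p.rep)
        ∪ (Finset.univ.filter fun p : Projectivization E (Fin 3 → E) =>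
          OnFLine F E p.rep ∧ ¬ IsFRational F E p.rep)
        = Finset.univ.filter fun p : Projectivization E (Fin 3 → E) => OnFLine F E p.rep := by
      ext p
      simp only [Finset.mem_union, Finset.mem_filter, Finset.mem_univ, true_and]
      constructor
      · rintro (h | h)
        · exact PGLProof.rational_onLine h
        · exact h.1
      · intro h
        by_cases hA : IsFRational F E p.rep
        · exact Or.inl hA
        · exact Or.inr ⟨h, hA⟩
    rw [hun]
    exact Finset.card_filter_add_card_filter_not _
  have hTf : Fintype.card (Projectivization E (Fin 3 → E)) = (q ^ 3) ^ 2 + q ^ 3 + 1 := by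
    rw [← Nat.card_eq_fintype_card]; exact hT
  rw [eR] at hv2
  rw [eN] at hv4
  rw [eM]
  have hKey : Fintype.card {p : Projectivization E (Fin 3 → E) //
      OnFLine F E p.rep ∧ ¬ IsFRational F E p.rep}
      + ((q ^ 2 + q + 1) + q ^ 3 * (q ^ 2 - 1) * (q - 1)) = (q ^ 3) ^ 2 + q ^ 3 + 1 := by
    rw [← hv2, ← hv4, ← hTf, ← hpart]; ring
  exact Nat.add_right_cancel (hKey.trans (PGLProof.arith4 hq1).symm)
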